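/- Let S = {−∞} ∪ ([0,1] ∩ ℚ), equipped with addition x ⊕ y = max(x, y) and multiplication x ⊗ y = min(x + y, 1) (with −∞ absorbing for ⊗ and neutral for ⊕). Then S is a commutative idempotent semiring with zero element −∞ and identity element 0; S is locally finite (every finitely generated subsemiring of S is finite); and yet there is no pair of natural numbers i < j with a^{⊗i} = a^{⊗j} for all a ∈ S. -/

import Mathlib

/-- The rational unit interval `[0,1] ∩ ℚ`. -/
def UnitInterval : Type := {q : ℚ // 0 ≤ q ∧ q ≤ 1}

/-- The set `S = {−∞} ∪ ([0,1] ∩ ℚ)`, with `none` playing the role of `−∞`. -/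
def TruncSemiring : Type := Option UnitInterval

namespace TruncSemiring

/-- Addition `x ⊕ y = max (x, y)`, with `−∞` neutral. -/
def add : TruncSemiring → TruncSemiring → TruncSemiring
  | none, y => y
  | x, none => x
  | some a, some b =>
      some ⟨max a.1 b.1, le_max_of_le_left a.2.1, max_le a.2.2 b.2.2⟩

/-- Multiplication `x ⊗ y = min (x + y, 1)`, with `−∞` absorbing. -/
def mul : TruncSemiring → TruncSemiring → TruncSemiring
  | none, _ => none
  | _, none => none
  | some a, some b =>
      some ⟨min (a.1 + b.1) 1, le_min (add_nonneg a.2.1 b.2.1) zero_le_one,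
        min_le_right _ _⟩

instance : Add TruncSemiring := ⟨add⟩
instance : Mul TruncSemiring := ⟨mul⟩
instance : Zero TruncSemiring := ⟨none⟩
instance : One TruncSemiring := ⟨some ⟨0, le_refl 0, zero_le_one⟩⟩

private lemma trunc_aux (x c : ℚ) (hc : 0 ≤ c) : min (min x 1 + c) 1 = min (x + c) 1 := by
  rcases le_total x 1 with h | h
  · rw [min_eq_left h]
  · rw [min_eq_right h, min_eq_right (le_add_of_nonneg_right hc),
      min_eq_right (le_trans h (le_add_of_nonneg_right hc))]

private lemma dist_aux (a b c : ℚ) :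
    min (a + max b c) 1 = max (min (a + b) 1) (min (a + c) 1) := by
  rcases le_total b c with h | h
  · rw [max_eq_right h,
      max_eq_right (min_le_min (add_le_add le_rfl h) (le_refl 1))]
  · rw [max_eq_left h,
      max_eq_left (min_le_min (add_le_add le_rfl h) (le_refl 1))]

/-- `S` is a commutative (idempotent) semiring with zero `−∞` and identity `0`. -/
instance instCommSemiring : CommSemiring TruncSemiring where
  add := (· + ·)
  zero := 0
  mul := (· * ·)
  one := 1
  nsmul := nsmulRec
  npow := npowRec
  add_assoc := by
    intro a b c
    cases a <;> cases b <;> cases c <;> try rfl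
    exact congrArg some (Subtype.ext (max_assoc _ _ _))
  zero_add := by intro a; cases a <;> rfl
  add_zero := by intro a; cases a <;> rfl
  add_comm := by
    intro a b
    cases a <;> cases b <;> try rfl
    exact congrArg some (Subtype.ext (max_comm _ _))
  mul_assoc := by
    intro a b c
    cases a <;> cases b <;> cases c <;> try rfl
    rename_i x y z
    refine congrArg some (Subtype.ext ?_)
    show min (min (x.1 + y.1) 1 + z.1) 1 = min (x.1 + min (y.1 + z.1) 1) 1
    rw [trunc_aux _ _ z.2.1, add_comm x.1 (min (y.1 + z.1) 1), trunc_aux _ _ x.2.1]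
    ring_nf
  one_mul := by
    intro a
    cases a
    · rfl
    · rename_i x
      refine congrArg some (Subtype.ext ?_)
      show min (0 + x.1) 1 = x.1
      rw [zero_add]
      exact min_eq_left x.2.2
  mul_one := by
    intro a
    cases a
    · rfl
    · rename_i x
      refine congrArg some (Subtype.ext ?_)
      show min (x.1 + 0) 1 = x.1
      rw [add_zero]
      exact min_eq_left x.2.2
  zero_mul := by intro a; cases a <;> rfl
  mul_zero := by intro a; cases a <;> rfl
  left_distrib := by
    intro a b c
    cases a <;> cases b <;> cases c <;> try rfl
    rename_i x y z
    refine congrArg some (Subtype.ext ?_)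
    show min (x.1 + max y.1 z.1) 1 = max (min (x.1 + y.1) 1) (min (x.1 + z.1) 1)
    exact dist_aux _ _ _
  right_distrib := by
    intro a b c
    cases a <;> cases b <;> cases c <;> try rfl
    rename_i x y z
    refine congrArg some (Subtype.ext ?_)
    show min (max x.1 y.1 + z.1) 1 = max (min (x.1 + z.1) 1) (min (y.1 + z.1) 1)
    rw [add_comm (max x.1 y.1) z.1, add_comm x.1 z.1, add_comm y.1 z.1]
    exact dist_aux _ _ _
  mul_comm := by
    intro a b
    cases a <;> cases b <;> try rfl
    refine congrArg some (Subtype.ext ?_)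
    exact congrArg (fun t => min t 1) (add_comm _ _)

@[reducible] private def ofU (a : UnitInterval) : TruncSemiring := some a

private lemma mul_some_some (a b : UnitInterval) :
    ofU a * ofU b
      = ofU ⟨min (a.1 + b.1) 1, le_min (add_nonneg a.2.1 b.2.1) zero_le_one,
          min_le_right _ _⟩ := rfl

private lemma none_zero : (none : Option UnitInterval) = (0 : TruncSemiring) := rfl

private def denOf : TruncSemiring → ℕ
  | none => 1
  | some a => a.1.den

/-- the candidate subsemiring containing everything with denominator dividing `N` -/
private def goodSub (N : ℕ) (hN : 0 < N) : Subsemiring TruncSemiring where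
  carrier := {x | x = none ∨ ∃ a : UnitInterval, x = some a ∧ ∃ z : ℤ, a.1 * N = z}
  zero_mem' := Or.inl rfl
  one_mem' := Or.inr ⟨⟨0, le_refl 0, zero_le_one⟩, rfl, ⟨0, by push_cast; ring⟩⟩
  add_mem' := by
    rintro x y (rfl | ⟨a, rfl, za, ha⟩) hy
    · cases y with
      | none => exact Or.inl rfl
      | some b => exact hy
    rcases hy with rfl | ⟨b, rfl, zb, hb⟩
    · exact Or.inr ⟨a, rfl, za, ha⟩
    refine Or.inr ⟨_, rfl, ?_⟩
    show ∃ z : ℤ, (max a.1 b.1) * N = z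
    rcases le_total a.1 b.1 with h | h
    · rw [max_eq_right h]; exact ⟨zb, hb⟩
    · rw [max_eq_left h]; exact ⟨za, ha⟩
  mul_mem' := by
    rintro x y (rfl | ⟨a, rfl, za, ha⟩) hy
    · exact Or.inl (by cases y <;> rfl)
    rcases hy with rfl | ⟨b, rfl, zb, hb⟩
    · exact Or.inl rfl
    rw [mul_some_some]
    refine Or.inr ⟨_, rfl, ?_⟩
    show ∃ z : ℤ, (min (a.1 + b.1) 1) * N = z
    rcases le_total (a.1 + b.1) 1 with h | h
    · rw [min_eq_left h]; exact ⟨za + zb, by push_cast; rw [add_mul, ha, hb]⟩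
    · rw [min_eq_right h]; exact ⟨N, by push_cast; ring⟩

private lemma goodSub_finite (N : ℕ) (hN : 0 < N) :
    ((goodSub N hN : Subsemiring TruncSemiring) : Set TruncSemiring).Finite := by
  have hNQ : (0 : ℚ) < N := by exact_mod_cast hN
  have hA : ({a : UnitInterval | ∃ z : ℤ, a.1 * N = z}).Finite := by
    have hinj : Set.InjOn (fun a : UnitInterval => (a.1 * N).num)
        {a : UnitInterval | ∃ z : ℤ, a.1 * N = z} := by
      rintro a ⟨za, ha⟩ b ⟨zb, hb⟩ h
      simp only [ha, hb, Rat.num_intCast] at h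
      refine Subtype.ext (mul_right_cancel₀ (ne_of_gt hNQ) ?_)
      rw [ha, hb, h]
    refine Set.Finite.of_finite_image ?_ hinj
    refine Set.Finite.subset (Set.finite_Icc (0 : ℤ) N) ?_
    rintro z ⟨a, ⟨w, hw⟩, rfl⟩
    simp only [hw, Rat.num_intCast]
    refine ⟨?_, ?_⟩
    · have : (0 : ℚ) ≤ (w : ℚ) := hw ▸ mul_nonneg a.2.1 hNQ.le
      exact_mod_cast this
    · have : (w : ℚ) ≤ (N : ℚ) := by
        rw [← hw]
        calc a.1 * N ≤ 1 * N := by nlinarith [a.2.2]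
        _ = N := one_mul _
      exact_mod_cast this
  have : ((goodSub N hN : Subsemiring TruncSemiring) : Set TruncSemiring)
      ⊆ insert none (some '' {a : UnitInterval | ∃ z : ℤ, a.1 * N = z}) := by
    rintro x (rfl | ⟨a, rfl, hz⟩)
    · exact Set.mem_insert _ _
    · exact Set.mem_insert_of_mem _ ⟨a, hz, rfl⟩
  exact Set.Finite.subset ((hA.image some).insert none) this

private lemma pow_some (q : ℚ) (h0 : 0 ≤ q) (h1 : q ≤ 1) (k : ℕ) :
    (ofU ⟨q, h0, h1⟩) ^ k
      = ofU ⟨min (k * q) 1, le_min (by positivity) zero_le_one, min_le_right _ _⟩ := by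
  induction k with
  | zero =>
    rw [pow_zero]
    exact congrArg ofU (Subtype.ext (by norm_num))
  | succ n ih =>
    rw [pow_succ, ih]; refine (mul_some_some _ _).trans ?_
    refine congrArg ofU (Subtype.ext ?_)
    show min (min (n * q) 1 + q) 1 = min ((n + 1 : ℕ) * q) 1
    rw [trunc_aux _ _ h0]
    push_cast
    ring_nf

/-- **Statement 18.** `S = {−∞} ∪ ([0,1] ∩ ℚ)` with `x ⊕ y = max(x,y)` and
`x ⊗ y = min(x+y,1)` is a commutative idempotent semiring with zero `−∞` and one `0`;
it is locally finite, and yet it satisfies no multiplicative torsion identity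
`a^i = a^j` with `i < j`. -/
theorem truncSemiring_locally_finite_no_torsion :
    (∀ a : TruncSemiring, a + a = a) ∧
    ((0 : TruncSemiring) = none) ∧
    ((1 : TruncSemiring) = some ⟨0, le_refl 0, zero_le_one⟩) ∧
    (∀ F : Finset TruncSemiring,
      (Subsemiring.closure (F : Set TruncSemiring) : Set TruncSemiring).Finite) ∧
    ¬ ∃ i j : ℕ, i < j ∧ ∀ a : TruncSemiring, a ^ i = a ^ j := by
  refine ⟨?_, rfl, rfl, ?_, ?_⟩
  · intro a
    cases a
    · rfl
    · exact congrArg some (Subtype.ext (max_self _))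
  · intro F
    set N : ℕ := ∏ x ∈ F, denOf x with hNdef
    have hN : 0 < N := by
      refine Finset.prod_pos ?_
      intro x hx
      cases x
      · exact Nat.one_pos
      · exact Rat.den_pos _
    have hsub : Subsemiring.closure (F : Set TruncSemiring) ≤ goodSub N hN := by
      rw [Subsemiring.closure_le]
      intro x hx
      cases x with
      | none => exact Or.inl rfl
      | some a =>
        refine Or.inr ⟨a, rfl, ?_⟩
        have hdvd : a.1.den ∣ N := by
          have : denOf (some a) ∣ N := Finset.dvd_prod_of_mem denOf hx
          exact this
        obtain ⟨m, hm⟩ := hdvd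
        refine ⟨a.1.num * m, ?_⟩
        have hden : (a.1.den : ℚ) ≠ 0 := by
          exact_mod_cast (Rat.den_pos _).ne'
        have hnum : (a.1.num : ℚ) = a.1 * a.1.den :=
          (div_eq_iff hden).mp (Rat.num_div_den a.1)
        rw [hm]
        push_cast
        rw [← mul_assoc, ← hnum]
    exact Set.Finite.subset (goodSub_finite N hN) hsub
  · rintro ⟨i, j, hij, h⟩
    have hj : 0 < j := lt_of_le_of_lt (Nat.zero_le i) hij
    have hjQ : (0 : ℚ) < j := by exact_mod_cast hj
    set q : ℚ := 1 / j with hq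
    have h0 : 0 ≤ q := by positivity
    have h1 : q ≤ 1 := by
      rw [hq, div_le_one hjQ]
      exact_mod_cast hj
    have := h (ofU ⟨q, h0, h1⟩)
    rw [pow_some q h0 h1 i, pow_some q h0 h1 j] at this
    have hval : min (i * q) 1 = min (j * q) 1 :=
      congrArg Subtype.val (Option.some.inj this)
    have hjq : (j : ℚ) * q = 1 := by
      rw [hq]; field_simp
    have hiq : (i : ℚ) * q < 1 := by
      rw [hq]
      rw [mul_one_div, div_lt_one hjQ]
      exact_mod_cast hij
    rw [hjq, min_self, min_eq_left hiq.le] at hval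
    exact absurd hval hiq.ne

end TruncSemiring
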